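/- Let B be a left semi-brace. Then a·b ∈ G for all a, b ∈ B. Moreover: (1) a·e = 0 for all a ∈ B and e ∈ E; (2) a·b = a·g_b for all a, b ∈ B; (3) a·b + b = λ_a(b) + e_b for all a, b ∈ B. -/

import Mathlib

/-- A left semi-brace: `(B,+)` is a left cancellative semigroup, `(B,*)` is a group
(whose identity `1` plays the role of `0` in the additive notation of the paper, and
`a⁻¹` plays the role of `a⁻`), and `a ∘ (b + c) = a ∘ b + a ∘ (a⁻ + c)` holds. -/
class LeftSemiBrace (B : Type*) extends Group B, Add B where
  add_assoc : ∀ a b c : B, a + b + c = a + (b + c)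
  add_left_cancel : ∀ a b c : B, a + b = a + c → b = c
  circ_add : ∀ a b c : B, a * (b + c) = a * b + a * (a⁻¹ + c)

namespace LeftSemiBrace

variable {B : Type*} [LeftSemiBrace B]

/-- The set `E` of additive idempotents. -/
def E (B : Type*) [LeftSemiBrace B] : Set B := {e | e + e = e}

/-- The set `G = B + 0`. -/
def G (B : Type*) [LeftSemiBrace B] : Set B := {x | ∃ b : B, x = b + 1}

/-- `λ_a (b) = a ∘ (a⁻ + b)`. -/
def lam (a b : B) : B := a * (a⁻¹ + b)

/-- `ρ_b (a) = (a⁻ + b)⁻ ∘ b`. -/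
def rho (b a : B) : B := (a⁻¹ + b)⁻¹ * b

/-- `a · b = λ_a(a⁻) + a ∘ b + λ_b(b⁻)`. -/
def dot (a b : B) : B := lam a a⁻¹ + a * b + lam b b⁻¹

/-- The group part `g_b = b + 0` of an element `b`. -/
def gp (b : B) : B := b + 1

/-- The additive inverse (within the group `(G,+)`) of the group part of an element:
for `g ∈ G` one has `neg g = -g`, since `-g_a = λ_a(a⁻) = a ∘ (a⁻ + a⁻)`. -/
def neg (a : B) : B := a * (a⁻¹ + a⁻¹)

/-- The idempotent part `e_b = -g_b + b` of an element `b`. -/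
def ep (b : B) : B := neg (gp b) + b

/-- `S` is a subsemigroup of `(B,+)`. -/
def IsAddSubsemigroup (S : Set B) : Prop := ∀ x ∈ S, ∀ y ∈ S, x + y ∈ S

/-- `S` is a subgroup of the multiplicative group `(B,∘)`. -/
def IsCircSubgroup (S : Set B) : Prop :=
  (1 : B) ∈ S ∧ (∀ x ∈ S, ∀ y ∈ S, x * y ∈ S) ∧ ∀ x ∈ S, x⁻¹ ∈ S

/-- `S` is a normal subgroup of the multiplicative group `(B,∘)`. -/
def IsCircNormal (S : Set B) : Prop :=
  IsCircSubgroup S ∧ ∀ x ∈ S, ∀ b : B, b * x * b⁻¹ ∈ S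

/-- `S` is a subgroup of the group `(G,+)`. -/
def IsAddSubgroupOfG (S : Set B) : Prop :=
  S ⊆ G B ∧ (1 : B) ∈ S ∧ (∀ x ∈ S, ∀ y ∈ S, x + y ∈ S) ∧ ∀ x ∈ S, neg x ∈ S

/-- `S` is a normal subgroup of the group `(G,+)`. -/
def IsAddNormalSubgroupOfG (S : Set B) : Prop :=
  IsAddSubgroupOfG S ∧ ∀ g ∈ G B, ∀ x ∈ S, g + x + neg g ∈ S

/-- `I` is an ideal of the left semi-brace `B` (Definition 17 of Catino–Colazzo–Stefanelli):
`I` is a subsemigroup of `(B,+)`, a normal subgroup of `(B,∘)`, `I ∩ G` is a normal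
subgroup of `(G,+)`, `ρ_b(n) ∈ I` for all `b ∈ B`, `n ∈ I ∩ G`, and `λ_g(e) ∈ I` for all
`g ∈ G`, `e ∈ I ∩ E`. -/
def IsIdeal (I : Set B) : Prop :=
  IsAddSubsemigroup I ∧ IsCircNormal I ∧ IsAddNormalSubgroupOfG (I ∩ G B) ∧
    (∀ b : B, ∀ n ∈ I ∩ G B, rho b n ∈ I) ∧
    (∀ g ∈ G B, ∀ e ∈ I ∩ E B, lam g e ∈ I)

/-- `I` is a left ideal of the left semi-brace `B`. -/
def IsLeftIdeal (I : Set B) : Prop :=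
  (∀ x ∈ I, x + 1 ∈ I) ∧ IsAddSubgroupOfG (I ∩ G B) ∧
    (∀ g ∈ G B, ∀ x ∈ I, lam g x ∈ I) ∧ IsCircSubgroup I

/-- The subgroup of `(G,+)` generated by a subset `S` of `G`. -/
def addClosure (S : Set B) : Set B :=
  ⋂₀ {T : Set B | S ⊆ T ∧ (1 : B) ∈ T ∧ (∀ x ∈ T, ∀ y ∈ T, x + y ∈ T) ∧ ∀ x ∈ T, neg x ∈ T}

/-- `X · Y`: the subgroup of `(G,+)` generated by `{x · y : x ∈ X, y ∈ Y}`. -/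
def dotSet (X Y : Set B) : Set B := addClosure {z | ∃ x ∈ X, ∃ y ∈ Y, z = dot x y}

/-- `S + E = {s + e : s ∈ S, e ∈ E}`. -/
def addE (S : Set B) : Set B := {z | ∃ s ∈ S, ∃ e ∈ E B, z = s + e}

/-- The right series of `B`: `rightSeries B n = B^(n+1)`, where `B^(1) = B` and
`B^(n+1) = B^(n) · B + E`. -/
def rightSeries (B : Type*) [LeftSemiBrace B] : ℕ → Set B
  | 0 => Set.univ
  | n + 1 => addE (dotSet (rightSeries B n) Set.univ)

/-- The left series of `B`: `leftSeries B n = B^(n+1)`, where `B^1 = B` and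
`B^(n+1) = B · B^n + E`. -/
def leftSeries (B : Type*) [LeftSemiBrace B] : ℕ → Set B
  | 0 => Set.univ
  | n + 1 => addE (dotSet Set.univ (leftSeries B n))

/-- The right series of the skew left brace `G`: `rightSeriesG B n = G^(n+1)`, where
`G^(1) = G` and `G^(n+1) = G^(n) · G`. -/
def rightSeriesG (B : Type*) [LeftSemiBrace B] : ℕ → Set B
  | 0 => G B
  | n + 1 => dotSet (rightSeriesG B n) (G B)

/-- The series `bracketSeries B n = B^[n+1]`, where `B^[1] = B` and `B^[n+1] = H_n + E`
with `H_n` the subgroup of `(G,+)` generated by `⋃_{i=1}^{n} B^[i] · B^[n+1-i]`. -/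
def bracketSeries (B : Type*) [LeftSemiBrace B] : ℕ → Set B
  | 0 => Set.univ
  | n + 1 =>
      addE (addClosure (⋃ i : Fin (n + 1),
        dotSet (bracketSeries B i.1) (bracketSeries B (n - i.1))))
  decreasing_by
  · exact i.isLt
  · exact Nat.lt_succ_of_le (Nat.sub_le n i.1)

/-- The socle `Soc(B) = {a ∈ B : ρ_a = ρ_0, λ_a = λ_0}`. -/
def Soc (B : Type*) [LeftSemiBrace B] : Set B :=
  {a | rho a = rho (1 : B) ∧ lam a = lam (1 : B)}

/-- The generalized socle `Zoc(B) = Soc(B) + E`. -/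
def Zoc (B : Type*) [LeftSemiBrace B] : Set B :=
  {z | ∃ a ∈ Soc B, ∃ e ∈ E B, z = a + e}

/-- The lower central series of the group `(G,+)`:  `γ_1 = G` and `γ_{n+1}` is the
subgroup of `(G,+)` generated by the additive commutators `-x - y + x + y` with
`x ∈ γ_n`, `y ∈ G`. -/
def lowerCentralSeriesG (B : Type*) [LeftSemiBrace B] : ℕ → Set B
  | 0 => G B
  | n + 1 => addClosure
      {z | ∃ x ∈ lowerCentralSeriesG B n, ∃ y ∈ G B, z = neg x + neg y + x + y}

/-- The group `(G,+)` is nilpotent. -/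
def IsNilpotentGAdd (B : Type*) [LeftSemiBrace B] : Prop :=
  ∃ n : ℕ, lowerCentralSeriesG B n = {(1 : B)}

section Aux

variable {B : Type*} [LeftSemiBrace B]

private lemma aassoc (a b c : B) : a + b + c = a + (b + c) :=
  LeftSemiBrace.add_assoc a b c

private lemma acancel {a b c : B} (h : a + b = a + c) : b = c :=
  LeftSemiBrace.add_left_cancel a b c h

private lemma one_add' (c : B) : (1 : B) + c = c := by
  have h := circ_add (1 : B) c c
  simp only [one_mul, inv_one] at h
  exact (acancel h).symm

/-- `λ_a` is additive. -/
private lemma lam_add' (a x y : B) : lam a (x + y) = lam a x + lam a y := by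
  have h := circ_add a (a⁻¹ + x) y
  simpa [lam, aassoc] using h

/-- `a ∘ c = a + λ_a(c)`. -/
private lemma mul_eq_add_lam (a c : B) : a * c = a + lam a c := by
  have h := circ_add a 1 c
  simpa [one_add', lam] using h

private lemma add_lam_inv (a : B) : a + lam a a⁻¹ = 1 := by
  have h := mul_eq_add_lam a a⁻¹
  simp at h
  exact h.symm

private lemma lam_lam (a b c : B) : lam a (lam b c) = lam (a * b) c := by
  have h1 : b * (b⁻¹ * a⁻¹ + c) = a⁻¹ + lam b c := by
    have h := circ_add b (b⁻¹ * a⁻¹) c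
    simpa [lam, mul_assoc] using h
  calc lam a (lam b c) = a * (b * (b⁻¹ * a⁻¹ + c)) := by rw [h1, lam]
    _ = lam (a * b) c := by rw [lam, mul_inv_rev, mul_assoc]

private lemma lam_one_apply (x : B) : lam (1 : B) x = x := by
  simp [lam, one_add']

private lemma lam_lam_inv (a x : B) : lam a (lam a⁻¹ x) = x := by
  rw [lam_lam, mul_inv_cancel, lam_one_apply]

/-- `λ_a(a⁻¹) + a = λ_a(1)`. -/
private lemma lam_inv_add_self (a : B) : lam a a⁻¹ + a = lam a 1 := by
  have h : a⁻¹ + lam a⁻¹ a = 1 := by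
    rw [← mul_eq_add_lam, inv_mul_cancel]
  calc lam a a⁻¹ + a = lam a a⁻¹ + lam a (lam a⁻¹ a) := by rw [lam_lam_inv]
    _ = lam a (a⁻¹ + lam a⁻¹ a) := (lam_add' a _ _).symm
    _ = lam a 1 := by rw [h]

/-- The key identity `λ_a(a⁻¹) + a ∘ b = λ_a(b)`. -/
private lemma lam_inv_add_mul (a b : B) : lam a a⁻¹ + a * b = lam a b := by
  rw [mul_eq_add_lam, ← aassoc, lam_inv_add_self, ← lam_add', one_add']

/-- Idempotents are left identities. -/
private lemma idem_add {e : B} (he : e + e = e) (x : B) : e + x = x := by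
  have : e + (e + x) = e + x := by rw [← aassoc, he]
  exact acancel this

private lemma lam_idem {a e : B} (he : e + e = e) : lam a e + lam a e = lam a e := by
  rw [← lam_add', idem_add he]

/-- `λ_b(b⁻¹) + 1 = λ_b(b⁻¹)`. -/
private lemma lam_inv_add_one (b : B) : lam b b⁻¹ + 1 = lam b b⁻¹ := by
  have h1 : (1 : B) = lam b (lam b⁻¹ 1) := (lam_lam_inv b 1).symm
  rw [h1, ← lam_add']
  have : b⁻¹ + lam b⁻¹ 1 = b⁻¹ * 1 := (mul_eq_add_lam b⁻¹ 1).symm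
  rw [this, mul_one]

/-- `neg (gp b) = λ_b(b⁻¹)`. -/
private lemma neg_gp (b : B) : neg (gp b) = lam b b⁻¹ := by
  have h1 : gp b + neg (gp b) = 1 := add_lam_inv (gp b)
  have h2 : gp b + lam b b⁻¹ = 1 := by
    rw [gp, aassoc, one_add', add_lam_inv]
  exact acancel (h1.trans h2.symm)

/-- `a · b = λ_a(b) + λ_b(b⁻¹)`. -/
private lemma dot_eq (a b : B) : dot a b = lam a b + lam b b⁻¹ := by
  rw [dot, lam_inv_add_mul]

end Aux

/-- `a·b ∈ G` for all `a, b ∈ B`; moreover (1) `a·e = 0` for all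
`a ∈ B`, `e ∈ E`; (2) `a·b = a·g_b`; (3) `a·b + b = λ_a(b) + e_b`. -/
theorem dot_mem_G (B : Type*) [LeftSemiBrace B] :
    (∀ a b : B, dot a b ∈ G B) ∧
      (∀ a : B, ∀ e ∈ E B, dot a e = 1) ∧
      (∀ a b : B, dot a b = dot a (gp b)) ∧
      (∀ a b : B, dot a b + b = lam a b + ep b) := by
  refine ⟨?_, ?_, ?_, ?_⟩
  · intro a b
    refine ⟨dot a b, ?_⟩
    rw [dot_eq, aassoc, lam_inv_add_one]
  · intro a e he
    have he' : e + e = e := he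
    have h1 : lam e e⁻¹ = 1 := by
      have := add_lam_inv e
      rwa [idem_add he'] at this
    rw [dot_eq, h1, idem_add (lam_idem he')]
  · intro a b
    rw [dot_eq, dot_eq a (gp b)]
    have h1 : lam (gp b) (gp b)⁻¹ = lam b b⁻¹ := neg_gp b
    rw [h1, gp, lam_add', aassoc]
    congr 1
    exact (idem_add (lam_idem (one_add' 1)) (lam b b⁻¹)).symm
  · intro a b
    rw [dot_eq, ep, neg_gp, aassoc]

end LeftSemiBrace
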